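/- Let m ≥ 1, let (R, d) be a metric space, and let φ : [−1,1]^m × R → ℂ be continuous. Then for every compact subset K of R, sup over a ∈ [−1,1]^m and x ∈ K of | Σ_{ν ≺ N} Π_{j=1}^m binom(N_j, ν_j) ((1−a_j)/2)^{ν_j} ((1+a_j)/2)^{N_j−ν_j} · φ(1 − 2ν_1/N_1, …, 1 − 2ν_m/N_m, x) − φ(a, x) | tends to 0 as min_j N_j → ∞; i.e., for every ε > 0 there is M ∈ ℕ such that for every N = (N_1,…,N_m) ∈ (ℕ^*)^m with min_j N_j ≥ M this supremum is < ε. -/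

import Mathlib

open Finset

/-- real Bernstein weight -/
noncomputable def bw (n k : ℕ) (y : ℝ) : ℝ := (n.choose k : ℝ) * y ^ k * (1 - y) ^ (n - k)

lemma bw_nonneg {n k : ℕ} {y : ℝ} (hy : y ∈ Set.Icc (0:ℝ) 1) : 0 ≤ bw n k y := by
  obtain ⟨h0, h1⟩ := hy
  have : (0:ℝ) ≤ 1 - y := by linarith
  unfold bw; positivity

lemma bw_sum (n : ℕ) {y : ℝ} (hy : y ∈ Set.Icc (0:ℝ) 1) :
    ∑ k ∈ range (n + 1), bw n k y = 1 := by
  have := bernstein.probability n ⟨y, hy⟩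
  rw [← this, Finset.sum_range]
  exact Finset.sum_congr rfl fun k _ => by simp [bw, bernstein_apply]

lemma bw_var (n : ℕ) (hn : 1 ≤ n) {y : ℝ} (hy : y ∈ Set.Icc (0:ℝ) 1) :
    ∑ k ∈ range (n + 1), bw n k y * ((k : ℝ) / n - y) ^ 2 = y * (1 - y) / n := by
  have hn' : (0:ℝ) < n := by exact_mod_cast hn
  have := bernstein.variance (n := n) (by omega) ⟨y, hy⟩
  rw [← this, Finset.sum_range]
  refine Finset.sum_congr rfl fun k _ => ?_
  simp only [bernstein_apply, bw, bernstein.z]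
  ring

theorem statement_0 {R : Type*} [MetricSpace R] (m : ℕ) (hm : 1 ≤ m)
    (φ : (Fin m → ℝ) × R → ℂ)
    (hφ : ContinuousOn φ ((Set.univ.pi fun _ : Fin m => Set.Icc (-1 : ℝ) 1) ×ˢ Set.univ))
    (K : Set R) (hK : IsCompact K) :
    ∀ ε > 0, ∃ M : ℕ, ∀ N : Fin m → ℕ, (∀ j, 1 ≤ N j) → (∀ j, M ≤ N j) →
      ∀ a : Fin m → ℝ, (∀ j, a j ∈ Set.Icc (-1 : ℝ) 1) → ∀ x ∈ K,
        ‖(∑ ν ∈ Fintype.piFinset fun j => Finset.range (N j + 1),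
            (∏ j, ((N j).choose (ν j) : ℂ) * (((1 - a j) / 2 : ℝ) : ℂ) ^ (ν j) *
              (((1 + a j) / 2 : ℝ) : ℂ) ^ (N j - ν j)) *
            φ (fun j => 1 - 2 * (ν j : ℝ) / (N j : ℝ), x)) - φ (a, x)‖ < ε := by
  intro ε hε
  set Q : Set (Fin m → ℝ) := Set.univ.pi fun _ : Fin m => Set.Icc (-1 : ℝ) 1 with hQ
  set S : Set ((Fin m → ℝ) × R) := Q ×ˢ K with hS
  have hQcomp : IsCompact Q := isCompact_univ_pi fun _ => isCompact_Icc
  have hScomp : IsCompact S := hQcomp.prod hK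
  have hφS : ContinuousOn φ S :=
    hφ.mono (Set.prod_mono subset_rfl (Set.subset_univ K))
  obtain ⟨C, hC⟩ := hScomp.exists_bound_of_continuousOn hφS
  set C' : ℝ := max C 1 with hC'
  have hC'pos : (0:ℝ) < C' := lt_of_lt_of_le one_pos (le_max_right _ _)
  have hC'b : ∀ p ∈ S, ‖φ p‖ ≤ C' := fun p hp => (hC p hp).trans (le_max_left _ _)
  have hUC : UniformContinuousOn φ S := hScomp.uniformContinuousOn_of_continuous hφS
  rw [Metric.uniformContinuousOn_iff] at hUC
  obtain ⟨δ, hδ, hUC⟩ := hUC (ε / 2) (by positivity)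
  set η : ℝ := δ / 4 with hη
  have hηpos : 0 < η := by positivity
  set c : ℝ := 2 * C' / η ^ 2 with hc
  have hcpos : 0 < c := by positivity
  obtain ⟨M, hM⟩ := exists_nat_gt (max 1 (2 * c * m / ε))
  have hM1 : (1:ℝ) < M := lt_of_le_of_lt (le_max_left _ _) hM
  have hMpos : (0:ℝ) < M := lt_trans one_pos hM1
  refine ⟨M, fun N hN1 hNM a ha x hx => ?_⟩
  set y : Fin m → ℝ := fun j => (1 - a j) / 2 with hy
  have hyI : ∀ j, y j ∈ Set.Icc (0:ℝ) 1 := by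
    intro j; obtain ⟨h1, h2⟩ := ha j
    constructor <;> simp only [hy] <;> linarith
  set W : (Fin m → ℕ) → ℝ := fun ν => ∏ j, bw (N j) (ν j) (y j) with hW
  have hWnn : ∀ ν, 0 ≤ W ν := fun ν => Finset.prod_nonneg fun j _ => bw_nonneg (hyI j)
  set t : (Fin m → ℕ) → (Fin m → ℝ) := fun ν j => 1 - 2 * (ν j : ℝ) / (N j : ℝ) with ht
  have hNpos : ∀ j, (0:ℝ) < N j := fun j => by exact_mod_cast hN1 j
  -- membership facts
  have htQ : ∀ ν ∈ Fintype.piFinset fun j => Finset.range (N j + 1), t ν ∈ Q := by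
    intro ν hν
    rw [Set.mem_univ_pi]
    intro j
    have hνj : ν j ≤ N j := by
      have := Finset.mem_range.mp ((Fintype.mem_piFinset.mp hν) j)
      omega
    have h0 : (0:ℝ) ≤ (ν j : ℝ) / (N j : ℝ) := by positivity
    have h1 : (ν j : ℝ) / (N j : ℝ) ≤ 1 := by
      rw [div_le_one (hNpos j)]; exact_mod_cast hνj
    constructor <;> simp only [ht] <;> · rw [mul_div_assoc]; linarith
  have haQ : a ∈ Q := Set.mem_univ_pi.mpr ha
  have haS : (a, x) ∈ S := Set.mk_mem_prod haQ hx
  -- weight coercion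
  have hwC : ∀ ν : Fin m → ℕ,
      (∏ j, ((N j).choose (ν j) : ℂ) * (((1 - a j) / 2 : ℝ) : ℂ) ^ (ν j) *
        (((1 + a j) / 2 : ℝ) : ℂ) ^ (N j - ν j)) = ((W ν : ℝ) : ℂ) := by
    intro ν
    rw [hW, Complex.ofReal_prod]
    refine Finset.prod_congr rfl fun j _ => ?_
    simp only [bw, hy]
    push_cast
    ring
  -- sum of weights is 1
  have hWsum : ∑ ν ∈ Fintype.piFinset fun j => Finset.range (N j + 1), W ν = 1 := by
    have h : ∑ ν ∈ Fintype.piFinset fun j => Finset.range (N j + 1), W ν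
        = ∏ j, ∑ k ∈ range (N j + 1), bw (N j) k (y j) :=
      (Finset.prod_univ_sum (fun j => Finset.range (N j + 1))
        (fun j k => bw (N j) k (y j))).symm
    rw [h, Finset.prod_eq_one fun j _ => bw_sum (N j) (hyI j)]
  -- variance bound per coordinate
  have hWvar : ∀ j0 : Fin m,
      ∑ ν ∈ Fintype.piFinset fun j => Finset.range (N j + 1),
        W ν * ((ν j0 : ℝ) / (N j0) - y j0) ^ 2 ≤ 1 / M := by
    intro j0
    have key : ∑ ν ∈ Fintype.piFinset fun j => Finset.range (N j + 1),
        W ν * ((ν j0 : ℝ) / (N j0) - y j0) ^ 2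
        = ∑ ν ∈ Fintype.piFinset fun j => Finset.range (N j + 1),
            ∏ i, (bw (N i) (ν i) (y i) *
              (if i = j0 then ((ν i : ℝ) / (N i) - y i) ^ 2 else 1)) := by
      refine Finset.sum_congr rfl fun ν _ => ?_
      rw [Finset.prod_mul_distrib]
      congr 1
      rw [Finset.prod_ite_eq' Finset.univ j0 (fun i => ((ν i : ℝ) / (N i) - y i) ^ 2)]
      simp
    have h2 : (∑ ν ∈ Fintype.piFinset fun j => Finset.range (N j + 1),
          ∏ i, (bw (N i) (ν i) (y i) *
            (if i = j0 then ((ν i : ℝ) / (N i) - y i) ^ 2 else 1)))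
        = ∏ i, ∑ k ∈ range (N i + 1), (bw (N i) k (y i) *
            (if i = j0 then ((k : ℝ) / (N i) - y i) ^ 2 else 1)) :=
      (Finset.prod_univ_sum (fun j => Finset.range (N j + 1))
        (fun i k => bw (N i) k (y i) *
          (if i = j0 then ((k : ℝ) / (N i) - y i) ^ 2 else 1))).symm
    have hval : ∀ i, ∑ k ∈ range (N i + 1),
        bw (N i) k (y i) * (if i = j0 then ((k : ℝ) / (N i) - y i) ^ 2 else 1)
        = if i = j0 then y i * (1 - y i) / (N i) else 1 := by
      intro i
      by_cases h : i = j0 <;> simp only [h, if_true, if_false, mul_one]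
      · subst h; exact bw_var (N i) (hN1 i) (hyI i)
      · exact bw_sum (N i) (hyI i)
    rw [key, h2, Finset.prod_congr rfl fun i _ => hval i,
      Finset.prod_ite_eq' Finset.univ j0 (fun i => y i * (1 - y i) / (N i))]
    simp only [Finset.mem_univ, if_true]
    have h0 := (hyI j0).1
    have h1 := (hyI j0).2
    have hMN : (M:ℝ) ≤ N j0 := by exact_mod_cast hNM j0
    have hy1 : y j0 * (1 - y j0) ≤ 1 := by nlinarith
    exact div_le_div₀ zero_le_one hy1 hMpos hMN
  -- pointwise estimate
  have hpt : ∀ ν ∈ Fintype.piFinset fun j => Finset.range (N j + 1),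
      ‖φ (t ν, x) - φ (a, x)‖ ≤ ε / 2 + c * ∑ j, ((ν j : ℝ) / (N j) - y j) ^ 2 := by
    intro ν hν
    have htS : (t ν, x) ∈ S := Set.mk_mem_prod (htQ ν hν) hx
    by_cases hnear : ∀ j, |(ν j : ℝ) / (N j) - y j| ≤ η
    · have hd : dist (t ν, x) (a, x) < δ := by
        rw [Prod.dist_eq]
        rw [max_lt_iff]
        constructor
        · refine lt_of_le_of_lt (dist_pi_le_iff (by positivity : (0:ℝ) ≤ δ/2) |>.mpr ?_)
            (by linarith : δ/2 < δ)
          intro j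
          have h1 : t ν j - a j = 2 * ((y j) - (ν j : ℝ) / (N j)) := by
            simp only [ht, hy]; ring
          rw [Real.dist_eq, h1, abs_mul, abs_two, abs_sub_comm]
          have h2 := hnear j
          rw [hη] at h2
          linarith
        · rw [dist_self]; exact hδ
      have := hUC _ htS _ haS hd
      rw [dist_eq_norm] at this
      have hnn : 0 ≤ c * ∑ j, ((ν j : ℝ) / (N j) - y j) ^ 2 := by positivity
      linarith
    · push_neg at hnear
      obtain ⟨j0, hj0⟩ := hnear
      have hsum : η ^ 2 ≤ ∑ j, ((ν j : ℝ) / (N j) - y j) ^ 2 := by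
        have e1 : η ^ 2 ≤ ((ν j0 : ℝ) / (N j0) - y j0) ^ 2 := by
          nlinarith [sq_abs ((ν j0 : ℝ) / (N j0) - y j0),
            abs_nonneg ((ν j0 : ℝ) / (N j0) - y j0)]
        have e2 : ((ν j0 : ℝ) / (N j0) - y j0) ^ 2
            ≤ ∑ j, ((ν j : ℝ) / (N j) - y j) ^ 2 :=
          Finset.single_le_sum (f := fun j => ((ν j : ℝ) / (N j) - y j) ^ 2)
            (fun j _ => sq_nonneg _) (Finset.mem_univ j0)
        linarith
      have h2C : c * η ^ 2 = 2 * C' := by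
        rw [hc]; field_simp
      have hb : ‖φ (t ν, x) - φ (a, x)‖ ≤ 2 * C' := by
        calc ‖φ (t ν, x) - φ (a, x)‖ ≤ ‖φ (t ν, x)‖ + ‖φ (a, x)‖ := norm_sub_le _ _
          _ ≤ C' + C' := add_le_add (hC'b _ htS) (hC'b _ haS)
          _ = 2 * C' := by ring
      have : 2 * C' ≤ c * ∑ j, ((ν j : ℝ) / (N j) - y j) ^ 2 := by
        rw [← h2C]
        exact mul_le_mul_of_nonneg_left hsum (le_of_lt hcpos)
      linarith
  -- main chain
  have hrw : (∑ ν ∈ Fintype.piFinset fun j => Finset.range (N j + 1),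
      (∏ j, ((N j).choose (ν j) : ℂ) * (((1 - a j) / 2 : ℝ) : ℂ) ^ (ν j) *
        (((1 + a j) / 2 : ℝ) : ℂ) ^ (N j - ν j)) *
      φ (fun j => 1 - 2 * (ν j : ℝ) / (N j : ℝ), x)) - φ (a, x)
      = ∑ ν ∈ Fintype.piFinset fun j => Finset.range (N j + 1),
          ((W ν : ℝ) : ℂ) * (φ (t ν, x) - φ (a, x)) := by
    have h1 : ((∑ ν ∈ Fintype.piFinset fun j => Finset.range (N j + 1), W ν : ℝ) : ℂ) = 1 := by
      rw [hWsum]; norm_num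
    push_cast at h1
    calc (∑ ν ∈ Fintype.piFinset fun j => Finset.range (N j + 1),
        (∏ j, ((N j).choose (ν j) : ℂ) * (((1 - a j) / 2 : ℝ) : ℂ) ^ (ν j) *
          (((1 + a j) / 2 : ℝ) : ℂ) ^ (N j - ν j)) *
        φ (fun j => 1 - 2 * (ν j : ℝ) / (N j : ℝ), x)) - φ (a, x)
        = (∑ ν ∈ Fintype.piFinset fun j => Finset.range (N j + 1),
            ((W ν : ℝ) : ℂ) * φ (t ν, x)) -
          (∑ ν ∈ Fintype.piFinset fun j => Finset.range (N j + 1), ((W ν : ℝ) : ℂ)) * φ (a, x) := by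
          rw [h1, one_mul]
          congr 1
          exact Finset.sum_congr rfl fun ν _ => by rw [hwC ν]
      _ = ∑ ν ∈ Fintype.piFinset fun j => Finset.range (N j + 1),
            ((W ν : ℝ) : ℂ) * (φ (t ν, x) - φ (a, x)) := by
          rw [Finset.sum_mul, ← Finset.sum_sub_distrib]
          exact Finset.sum_congr rfl fun ν _ => by ring
  rw [hrw]
  calc ‖∑ ν ∈ Fintype.piFinset fun j => Finset.range (N j + 1),
        ((W ν : ℝ) : ℂ) * (φ (t ν, x) - φ (a, x))‖
      ≤ ∑ ν ∈ Fintype.piFinset fun j => Finset.range (N j + 1),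
          W ν * ‖φ (t ν, x) - φ (a, x)‖ := by
        refine (norm_sum_le _ _).trans (le_of_eq (Finset.sum_congr rfl fun ν _ => ?_))
        rw [norm_mul, Complex.norm_real, Real.norm_eq_abs, abs_of_nonneg (hWnn ν)]
    _ ≤ ∑ ν ∈ Fintype.piFinset fun j => Finset.range (N j + 1),
          W ν * (ε / 2 + c * ∑ j, ((ν j : ℝ) / (N j) - y j) ^ 2) := by
        refine Finset.sum_le_sum fun ν hν => ?_
        exact mul_le_mul_of_nonneg_left (hpt ν hν) (hWnn ν)
    _ = ε / 2 + c * ∑ j, ∑ ν ∈ Fintype.piFinset fun j => Finset.range (N j + 1),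
          W ν * ((ν j : ℝ) / (N j) - y j) ^ 2 := by
        have step : ∀ ν : Fin m → ℕ, W ν * (ε / 2 + c * ∑ j, ((ν j : ℝ) / (N j) - y j) ^ 2)
            = W ν * (ε / 2) + ∑ j, c * (W ν * ((ν j : ℝ) / (N j) - y j) ^ 2) := by
          intro ν
          rw [mul_add]
          congr 1
          rw [Finset.mul_sum, Finset.mul_sum]
          exact Finset.sum_congr rfl fun j _ => by ring
        simp only [step]
        rw [Finset.sum_add_distrib, ← Finset.sum_mul, hWsum, one_mul, Finset.sum_comm,
          Finset.mul_sum]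
        congr 1
        refine Finset.sum_congr rfl fun j _ => ?_
        rw [Finset.mul_sum]
    _ ≤ ε / 2 + c * ∑ _j : Fin m, (1 / M : ℝ) := by
        have := Finset.sum_le_sum fun j (_ : j ∈ Finset.univ) => hWvar j
        have h := mul_le_mul_of_nonneg_left this (le_of_lt hcpos)
        linarith
    _ = ε / 2 + c * m / M := by
        rw [Finset.sum_const, Finset.card_univ, Fintype.card_fin]
        ring
    _ < ε := by
        have hMgt : 2 * c * m / ε < M := lt_of_le_of_lt (le_max_right _ _) hM
        have hmpos : (0:ℝ) < m := by exact_mod_cast hm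
        rw [div_lt_iff₀ hε] at hMgt
        have : c * m / M < ε / 2 := by
          rw [div_lt_iff₀ hMpos]
          nlinarith
        linarith
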